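/- Let m, n ≥ 2 be integers with m dividing n, let g₀ ≥ 1 and r ≥ 0, and for each i = 1, …, r, let n_{i1} be a positive divisor of m and n_{i2} a positive divisor of n, set n_i := lcm(n_{i1}, n_{i2}), and let c_{i1}, c_{i2} be integers with gcd(c_{i1}, n_{i1}) = 1 and gcd(c_{i2}, n_{i2}) = 1. Define v_i := ((m/n_{i1})·c_{i1}, (n/n_{i2})·c_{i2}) ∈ ℤ/mℤ × ℤ/nℤ, and assume Σ_{i=1}^r (m/n_{i1})·c_{i1} ≡ 0 (mod m) and Σ_{i=1}^r (n/n_{i2})·c_{i2} ≡ 0 (mod n). Let Γ be the group with presentation ⟨α₁, β₁, …, α_{g₀}, β_{g₀}, ξ₁, …, ξ_r | ξ₁^{n₁} = ⋯ = ξ_r^{n_r} = 1, ξ₁⋯ξ_r·[α₁,β₁]⋯[α_{g₀},β_{g₀}] = 1⟩. Then there exists a surjective group homomorphism φ : Γ → ℤ/mℤ × ℤ/nℤ such that φ(ξ_i) = v_i and the order of φ(ξ_i) equals n_i, for each i = 1, …, r. -/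

import Mathlib

/-- The generators of the orbifold group of signature `(g₀; n₁, …, n_r)`:
`Sum.inl (Sum.inl j)` is the hyperbolic generator `α_j`, `Sum.inl (Sum.inr j)` is `β_j`,
and `Sum.inr i` is the elliptic generator `ξ_i`. -/
abbrev OrbifoldGen (g₀ r : ℕ) : Type := (Fin g₀ ⊕ Fin g₀) ⊕ Fin r

open scoped commutatorElement

/-- The "long relator" `ξ₁⋯ξ_r · [α₁,β₁]⋯[α_{g₀},β_{g₀}]` in the free group on the
generators of the orbifold group of signature `(g₀; n₁, …, n_r)`. -/
def longRelator (g₀ r : ℕ) : FreeGroup (OrbifoldGen g₀ r) :=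
  (((List.finRange r).map fun i => FreeGroup.of (Sum.inr i : OrbifoldGen g₀ r)).prod) *
  (((List.finRange g₀).map fun j =>
      ⁅FreeGroup.of (Sum.inl (Sum.inl j) : OrbifoldGen g₀ r),
       FreeGroup.of (Sum.inl (Sum.inr j) : OrbifoldGen g₀ r)⁆).prod)

/-- The relators `ξ₁^{n₁}, …, ξ_r^{n_r}` and `ξ₁⋯ξ_r·∏_j [α_j,β_j]` of the orbifold group
of signature `(g₀; n₁, …, n_r)`. -/
def orbifoldRelators (g₀ r : ℕ) (nn : Fin r → ℕ) : Set (FreeGroup (OrbifoldGen g₀ r)) :=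
  {w | ∃ i, w = FreeGroup.of (Sum.inr i : OrbifoldGen g₀ r) ^ nn i} ∪ {longRelator g₀ r}

/-- In `ZMod m`, for `k : ℕ`, `k • ((m/d)·c) = 0` iff `d ∣ k`, when `d ∣ m`, `0 < m`,
and `gcd(c, d) = 1`. -/
lemma aux_nsmul_eq_zero_iff (m d : ℕ) (hm : 0 < m) (hd : 0 < d) (hdm : d ∣ m) (c : ℤ)
    (hc : Int.gcd c d = 1) (k : ℕ) :
    k • (((m / d : ℕ) : ZMod m) * (c : ZMod m)) = 0 ↔ d ∣ k := by
  have he : (d : ℤ) * ((m / d : ℕ) : ℤ) = (m : ℤ) := by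
    exact_mod_cast Nat.mul_div_cancel' hdm
  have hepos : ((m / d : ℕ) : ℤ) ≠ 0 := by
    have : 0 < m / d := Nat.div_pos (Nat.le_of_dvd hm hdm) hd
    exact_mod_cast this.ne'
  have hco : IsCoprime (d : ℤ) c := by
    rw [Int.isCoprime_iff_gcd_eq_one, Int.gcd_comm]; exact hc
  have hcast : k • (((m / d : ℕ) : ZMod m) * (c : ZMod m))
      = (((k : ℤ) * (((m / d : ℕ) : ℤ) * c) : ℤ) : ZMod m) := by
    rw [nsmul_eq_mul, Int.cast_mul, Int.cast_mul, Int.cast_natCast, Int.cast_natCast]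
  rw [hcast, ZMod.intCast_zmod_eq_zero_iff_dvd]
  constructor
  · intro h
    have h' : (d : ℤ) * ((m / d : ℕ) : ℤ) ∣ ((k : ℤ) * c) * ((m / d : ℕ) : ℤ) := by
      rw [he]; convert h using 1; ring
    have hdc : (d : ℤ) ∣ (k : ℤ) * c :=
      (mul_dvd_mul_iff_right hepos).mp h'
    have : (d : ℤ) ∣ (k : ℤ) := hco.dvd_of_dvd_mul_right hdc
    exact_mod_cast this
  · rintro ⟨t, rfl⟩
    rw [← he]
    push_cast
    exact ⟨t * c, by ring⟩

/-- The additive order of `(m/d)·c` in `ZMod m` is `d`, when `d ∣ m`, `0 < m`, and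
`gcd(c, d) = 1`. -/
lemma aux_addOrderOf (m d : ℕ) (hm : 0 < m) (hd : 0 < d) (hdm : d ∣ m) (c : ℤ)
    (hc : Int.gcd c d = 1) :
    addOrderOf (((m / d : ℕ) : ZMod m) * (c : ZMod m)) = d := by
  refine Nat.dvd_antisymm ?_ ?_
  · exact addOrderOf_dvd_of_nsmul_eq_zero
      ((aux_nsmul_eq_zero_iff m d hm hd hdm c hc d).mpr dvd_rfl)
  · exact (aux_nsmul_eq_zero_iff m d hm hd hdm c hc _).mp (addOrderOf_nsmul_eq_zero _)

/-- **Proposition 4.3, forward direction, positive-genus case.**  Given `2 ≤ m ∣ n`,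
`g₀ ≥ 1`, divisors `n_{i1} ∣ m`, `n_{i2} ∣ n`, `n_i = lcm(n_{i1}, n_{i2})`, integers
`c_{i1}, c_{i2}` coprime to `n_{i1}, n_{i2}`, with
`v_i = ((m/n_{i1})·c_{i1}, (n/n_{i2})·c_{i2}) ∈ ℤ/mℤ × ℤ/nℤ` and both coordinate sums
vanishing, there is a surjective homomorphism `φ` from the presented group
`⟨α_j, β_j, ξ_i ∣ ξ_i^{n_i}, ξ₁⋯ξ_r·∏_j[α_j,β_j]⟩` onto `ℤ/mℤ ⊕ ℤ/nℤ` with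
`φ(ξ_i) = v_i` of order `n_i`. -/
theorem exists_surjective_hom_of_abelian_data_positive_genus
    (m n : ℕ) (hm : 2 ≤ m) (hn : 2 ≤ n) (hmn : m ∣ n) (g₀ r : ℕ) (hg₀ : 1 ≤ g₀)
    (n1 n2 : Fin r → ℕ) (hn1pos : ∀ i, 0 < n1 i) (hn2pos : ∀ i, 0 < n2 i)
    (hn1 : ∀ i, n1 i ∣ m) (hn2 : ∀ i, n2 i ∣ n)
    (nn : Fin r → ℕ) (hnn : ∀ i, nn i = Nat.lcm (n1 i) (n2 i))
    (c1 c2 : Fin r → ℤ)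
    (hc1 : ∀ i, Int.gcd (c1 i) (n1 i) = 1) (hc2 : ∀ i, Int.gcd (c2 i) (n2 i) = 1)
    (v : Fin r → ZMod m × ZMod n)
    (hv : ∀ i, v i = (((m / n1 i : ℕ) : ZMod m) * (c1 i : ZMod m),
                      ((n / n2 i : ℕ) : ZMod n) * (c2 i : ZMod n)))
    (ha1 : ∑ i, ((m / n1 i : ℕ) : ZMod m) * (c1 i : ZMod m) = 0)
    (ha2 : ∑ i, ((n / n2 i : ℕ) : ZMod n) * (c2 i : ZMod n) = 0) :
    ∃ φ : PresentedGroup (orbifoldRelators g₀ r nn) →* Multiplicative (ZMod m × ZMod n),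
      Function.Surjective φ ∧
      ∀ i, φ (PresentedGroup.of (Sum.inr i : OrbifoldGen g₀ r)) = Multiplicative.ofAdd (v i) ∧
        orderOf (φ (PresentedGroup.of (Sum.inr i : OrbifoldGen g₀ r))) = nn i := by
  haveI : NeZero m := ⟨by omega⟩
  haveI : NeZero n := ⟨by omega⟩
  -- additive order of `v i` is `nn i`
  have hord : ∀ i, addOrderOf (v i) = nn i := by
    intro i
    rw [hv i, Prod.addOrderOf,
      aux_addOrderOf m (n1 i) (by omega) (hn1pos i) (hn1 i) (c1 i) (hc1 i),
      aux_addOrderOf n (n2 i) (by omega) (hn2pos i) (hn2 i) (c2 i) (hc2 i), hnn i]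
  -- the map on generators
  set f : OrbifoldGen g₀ r → Multiplicative (ZMod m × ZMod n) :=
    Sum.elim (Sum.elim (fun _ => Multiplicative.ofAdd ((1 : ZMod m), (0 : ZMod n)))
      (fun _ => Multiplicative.ofAdd ((0 : ZMod m), (1 : ZMod n))))
      (fun i => Multiplicative.ofAdd (v i)) with hf
  have hsum : ∑ i, v i = 0 := by
    rw [Prod.ext_iff]
    constructor
    · rw [Prod.fst_sum]
      simpa [hv] using ha1
    · rw [Prod.snd_sum]
      simpa [hv] using ha2
  have hrel : ∀ w ∈ orbifoldRelators g₀ r nn, FreeGroup.lift f w = 1 := by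
    rintro w (⟨i, rfl⟩ | rfl)
    · rw [map_pow, FreeGroup.lift_apply_of, hf, Sum.elim_inr, ← orderOf_dvd_iff_pow_eq_one,
        orderOf_ofAdd_eq_addOrderOf, hord i]
    · rw [longRelator, map_mul, map_list_prod, map_list_prod, List.map_map, List.map_map]
      have h2 : (((List.finRange g₀).map ((FreeGroup.lift f) ∘ fun j =>
          ⁅FreeGroup.of (Sum.inl (Sum.inl j) : OrbifoldGen g₀ r),
           FreeGroup.of (Sum.inl (Sum.inr j) : OrbifoldGen g₀ r)⁆)).prod) = 1 := by
        apply List.prod_eq_one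
        intro x hx
        simp only [List.mem_map, Function.comp_apply] at hx
        obtain ⟨j, -, rfl⟩ := hx
        rw [map_commutatorElement]
        exact commutatorElement_eq_one_iff_mul_comm.mpr (mul_comm _ _)
      rw [h2, mul_one]
      have h1 : (((List.finRange r).map ((FreeGroup.lift f) ∘ fun i =>
          FreeGroup.of (Sum.inr i : OrbifoldGen g₀ r))).prod)
          = ∏ i, Multiplicative.ofAdd (v i) := by
        rw [Fin.prod_univ_def]
        congr 1
        apply List.map_congr_left
        intro i _
        simp [hf]
      rw [h1, ← ofAdd_sum, hsum]
      rfl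
  refine ⟨PresentedGroup.toGroup hrel, ?_, ?_⟩
  · -- surjectivity
    intro y
    set a : ZMod m := (Multiplicative.toAdd y).1 with ha
    set b : ZMod n := (Multiplicative.toAdd y).2 with hb
    refine ⟨PresentedGroup.of (Sum.inl (Sum.inl ⟨0, hg₀⟩) : OrbifoldGen g₀ r) ^ a.val *
      PresentedGroup.of (Sum.inl (Sum.inr ⟨0, hg₀⟩) : OrbifoldGen g₀ r) ^ b.val, ?_⟩
    simp only [map_mul, map_pow, PresentedGroup.toGroup.of, hf, Sum.elim_inl, Sum.elim_inr]
    rw [← ofAdd_nsmul, ← ofAdd_nsmul, ← ofAdd_add]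
    have : a.val • ((1 : ZMod m), (0 : ZMod n)) + b.val • ((0 : ZMod m), (1 : ZMod n))
        = (a, b) := by
      rw [Prod.ext_iff]
      simp [ZMod.natCast_val, ZMod.cast_id]
    rw [this, ha, hb]
    simp
  · intro i
    constructor
    · rw [PresentedGroup.toGroup.of, hf, Sum.elim_inr]
    · rw [PresentedGroup.toGroup.of, hf, Sum.elim_inr, orderOf_ofAdd_eq_addOrderOf, hord i]
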